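/- arXiv:1312.4087 — 2 statements merged into one kernel-verified Lean document; each statement's English description precedes it below -/
import Mathlib

section
/- Uniform approximation bound (Lemma 4, inequality (6.16)). Let {φ_k}_{k≥0} satisfy the basis condition Σ_{k=0}^l φ_k(t)² ≤ C_φ²(l+1) for all t ∈ [0,1] and l ≥ 0. Let f(t) = Σ_{k=1}^∞ a_k φ_k(t) with coefficients satisfying Σ_{k=0}^∞ |a_k|^ν (k+1)^{νr'} ≤ C_a^ν, r' = r + 1/2 − 1/ν, for C_a > 0, 1 ≤ ν < ∞, r > min(1/2,1/ν), and suppose r* = min(r,r') ≥ 2 (so in particular r* > 3/2). Then for the partial sum f_J(t) = Σ_{k=1}^J a_kφ_k(t) and any J > 1, sup_{t∈[0,1]} |f(t) − f_J(t)| ≤ C·C_a C_φ (J+1)^{−(r*−1/2)} for an absolute constant C. -/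
open Finset Real

/-- Abel summation bound for the basis side. -/
lemma aux_abel (b : ℕ → ℝ) (hb : ∀ k, 0 ≤ b k) {Cb : ℝ} (hCb : 0 ≤ Cb)
    (hB : ∀ l : ℕ, ∑ k ∈ Finset.range (l+1), b k ≤ Cb * ((l : ℝ) + 1)) (J : ℕ) (N : ℕ) :
    ∑ k ∈ Finset.range N, b (k+J+1) / ((k : ℝ) + J + 2)^2 ≤ 3 * Cb / ((J : ℝ) + 1) := by
  have key : ∀ M : ℕ, ∑ k ∈ Finset.range M, b (k+J+1) / ((k : ℝ) + J + 2)^2 ≤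
      (∑ k ∈ Finset.range (J+M+1), b k) / ((J : ℝ) + M + 1)^2
        + 2*Cb*(1/((J : ℝ)+1) - 1/((J : ℝ) + M + 1)) := by
    intro M
    induction M with
    | zero =>
        simp only [Finset.range_zero, Finset.sum_empty, Nat.cast_zero]
        have h1 : 0 ≤ ∑ k ∈ Finset.range (J+0+1), b k :=
          Finset.sum_nonneg fun k _ => hb k
        have h2 : (0:ℝ) < ((J : ℝ) + 0 + 1)^2 := by positivity
        norm_num
        positivity
    | succ n ih =>
        rw [Finset.sum_range_succ]
        have hidx : n + J + 1 = J + n + 1 := by omega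
        rw [hidx]
        set x : ℝ := (J : ℝ) + n + 1 with hx
        have hx1 : (1:ℝ) ≤ x := by
          have : (0:ℝ) ≤ (J:ℝ) := Nat.cast_nonneg J
          have : (0:ℝ) ≤ (n:ℝ) := Nat.cast_nonneg n
          simp only [hx]; linarith
        have hx0 : (0:ℝ) < x := by linarith
        have hx10 : (0:ℝ) < x + 1 := by linarith
        set B1 : ℝ := ∑ k ∈ Finset.range (J+n+1), b k with hB1def
        have hB2 : ∑ k ∈ Finset.range (J+(n+1)+1), b k = B1 + b (J+n+1) := by
          have : J+(n+1)+1 = (J+n+1)+1 := by omega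
          rw [this, Finset.sum_range_succ]
        have hB1le : B1 ≤ Cb * x := by
          have := hB (J+n)
          have hc : ((J+n : ℕ) : ℝ) + 1 = x := by push_cast [hx]; ring
          rwa [hc] at this
        have hcast : ((J:ℝ) + (n+1 : ℕ) + 1) = x + 1 := by push_cast [hx]; ring
        have hcast2 : ((n : ℝ) + J + 2) = x + 1 := by simp only [hx]; ring
        rw [hB2, hcast, hcast2]
        have core : B1/x^2 - B1/(x+1)^2 ≤ 2*Cb*(1/x - 1/(x+1)) := by
          have h2 : B1/x^2 - B1/(x+1)^2 = B1*(2*x+1)/(x^2*(x+1)^2) := by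
            field_simp; ring
          have h3 : 2*Cb*(1/x - 1/(x+1)) = 2*Cb/(x*(x+1)) := by
            field_simp; ring
          rw [h2, h3, div_le_div_iff₀ (by positivity) (by positivity)]
          have hmul := mul_le_mul_of_nonneg_right hB1le
            (show (0:ℝ) ≤ (2*x+1)*(x*(x+1)) by positivity)
          have h5 : (0:ℝ) ≤ Cb * (x^2*(x+1)) := by positivity
          nlinarith [hmul, h5]
        have hsplit : (B1 + b (J+n+1))/(x+1)^2 = B1/(x+1)^2 + b (J+n+1)/(x+1)^2 := by
          ring
        rw [hsplit]
        linarith [ih]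
  have h := key N
  have hJ1 : (0:ℝ) < (J:ℝ) + 1 := by positivity
  have hJN : (0:ℝ) < (J:ℝ) + N + 1 := by positivity
  have hle : (J:ℝ) + 1 ≤ (J:ℝ) + N + 1 := by
    have : (0:ℝ) ≤ (N:ℝ) := Nat.cast_nonneg N
    linarith
  have hBN : (∑ k ∈ Finset.range (J+N+1), b k) / ((J : ℝ) + N + 1)^2 ≤ Cb / ((J:ℝ)+1) := by
    have h1 : (∑ k ∈ Finset.range (J+N+1), b k) ≤ Cb * ((J:ℝ)+N+1) := by
      have := hB (J+N)
      have hc : ((J+N : ℕ) : ℝ) + 1 = (J:ℝ)+N+1 := by push_cast; ring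
      rwa [hc] at this
    calc (∑ k ∈ Finset.range (J+N+1), b k) / ((J : ℝ) + N + 1)^2
        ≤ (Cb * ((J:ℝ)+N+1)) / ((J : ℝ) + N + 1)^2 := by
          apply div_le_div_of_nonneg_right h1 (by positivity) |>.trans_eq rfl
      _ = Cb / ((J:ℝ)+N+1) := by field_simp
      _ ≤ Cb / ((J:ℝ)+1) := by
          apply div_le_div_of_nonneg_left hCb hJ1 hle
  have h2Cb : 2*Cb*(1/((J : ℝ)+1) - 1/((J : ℝ) + N + 1)) ≤ 2*Cb/((J:ℝ)+1) := by
    have : (0:ℝ) ≤ 1/((J : ℝ) + N + 1) := by positivity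
    have h4 : 2*Cb*(1/((J : ℝ)+1) - 1/((J : ℝ) + N + 1)) ≤ 2*Cb*(1/((J : ℝ)+1)) := by
      apply mul_le_mul_of_nonneg_left _ (by linarith)
      linarith
    calc 2*Cb*(1/((J : ℝ)+1) - 1/((J : ℝ) + N + 1)) ≤ 2*Cb*(1/((J : ℝ)+1)) := h4
      _ = 2*Cb/((J:ℝ)+1) := by ring
  calc ∑ k ∈ Finset.range N, b (k+J+1) / ((k : ℝ) + J + 2)^2
      ≤ (∑ k ∈ Finset.range (J+N+1), b k) / ((J : ℝ) + N + 1)^2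
        + 2*Cb*(1/((J : ℝ)+1) - 1/((J : ℝ) + N + 1)) := h
    _ ≤ Cb/((J:ℝ)+1) + 2*Cb/((J:ℝ)+1) := add_le_add hBN h2Cb
    _ = 3 * Cb / ((J : ℝ) + 1) := by ring


/-- Telescoping step: for `1 ≤ y` and `2 ≤ s`, `(y+1)^(-s) ≤ y^(1-s) - (y+1)^(1-s)`. -/
lemma aux_step {y s : ℝ} (hy : 1 ≤ y) (hs : 2 ≤ s) :
    (y+1) ^ (-s) ≤ y ^ (1-s) - (y+1) ^ (1-s) := by
  have hy0 : (0:ℝ) < y := by linarith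
  have hy10 : (0:ℝ) < y + 1 := by linarith
  have hinv : (0:ℝ) < 1/y := by positivity
  have hbern : 1 + (s-1) * (1/y) ≤ (1 + 1/y) ^ (s-1) := by
    have := one_add_mul_self_le_rpow_one_add (s := 1/y) (by linarith : (-1:ℝ) ≤ 1/y)
      (by linarith : (1:ℝ) ≤ s - 1)
    linarith [this]
  have h1 : (1 + 1/y : ℝ) = (y+1)/y := by field_simp
  have h2 : ((y+1)/y) ^ (s-1) = (y+1)^(s-1) / y^(s-1) :=
    Real.div_rpow (by linarith : (0:ℝ) ≤ y+1) hy0.le (s-1)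
  -- multiply Bernoulli by (y+1)^(1-s) > 0
  have hpow : (0:ℝ) < (y+1)^(1-s) := Real.rpow_pos_of_pos hy10 _
  have hmul := mul_le_mul_of_nonneg_left hbern hpow.le
  have hr1 : (y+1)^(1-s) * ((1 + 1/y) ^ (s-1)) = y^(1-s) := by
    rw [h1, h2, div_eq_mul_inv, ← Real.rpow_neg hy0.le, ← mul_assoc,
      ← Real.rpow_add hy10, show (1-s+(s-1):ℝ) = 0 by ring, Real.rpow_zero, one_mul,
      show (-(s-1):ℝ) = 1-s by ring]
  have hr2 : (y+1)^(1-s) * (1 + (s-1) * (1/y)) =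
      (y+1)^(1-s) + (y+1)^(1-s) * (s-1) / y := by ring
  rw [hr1] at hmul
  rw [hr2] at hmul
  -- now: (y+1)^(1-s) + (y+1)^(1-s)*(s-1)/y ≤ y^(1-s)
  have hlast : (y+1)^(-s) ≤ (y+1)^(1-s) * (s-1) / y := by
    have he : (y+1)^(-s) = (y+1)^(1-s) / (y+1) := by
      rw [eq_div_iff hy10.ne', ← Real.rpow_add_one hy10.ne']
      congr 1
      ring
    rw [he]
    rw [div_le_div_iff₀ hy10 hy0]
    have h3 : (y+1)^(1-s) * y ≤ (y+1)^(1-s) * (y+1) := by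
      apply mul_le_mul_of_nonneg_left (by linarith) hpow.le
    have h4 : (y+1)^(1-s) * (y+1) ≤ (y+1)^(1-s) * (s-1) * (y+1) := by
      nlinarith [hpow, mul_pos hpow hy10]
    linarith
  linarith

/-- Tail bound for power sums: `∑_{k<N} (k+J+2)^(-s) ≤ (J+1)^(1-s)` when `s ≥ 2`. -/
lemma aux_tail_pow {s : ℝ} (hs : 2 ≤ s) (J : ℕ) (N : ℕ) :
    ∑ k ∈ Finset.range N, ((k : ℝ) + J + 2) ^ (-s) ≤ ((J : ℝ) + 1) ^ (1-s) := by
  have hterm : ∀ k ∈ Finset.range N,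
      ((k : ℝ) + J + 2) ^ (-s) ≤
        ((k : ℝ) + J + 1) ^ (1-s) - (((k+1 : ℕ) : ℝ) + J + 1) ^ (1-s) := by
    intro k _
    have hy : (1:ℝ) ≤ (k : ℝ) + J + 1 := by
      have : (0:ℝ) ≤ (k:ℝ) := Nat.cast_nonneg k
      have : (0:ℝ) ≤ (J:ℝ) := Nat.cast_nonneg J
      linarith
    have := aux_step hy hs
    have hc : ((k : ℝ) + J + 1) + 1 = (k:ℝ) + J + 2 := by ring
    have hc2 : (((k+1 : ℕ) : ℝ) + J + 1) = ((k : ℝ) + J + 1) + 1 := by push_cast; ring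
    rw [hc2, hc]
    rw [hc] at this
    linarith
  calc ∑ k ∈ Finset.range N, ((k : ℝ) + J + 2) ^ (-s)
      ≤ ∑ k ∈ Finset.range N,
          (((k : ℝ) + J + 1) ^ (1-s) - (((k+1 : ℕ) : ℝ) + J + 1) ^ (1-s)) :=
        Finset.sum_le_sum hterm
    _ = ((0 : ℝ) + J + 1) ^ (1-s) - ((N : ℝ) + J + 1) ^ (1-s) := by
        have := Finset.sum_range_sub' (f := fun k : ℕ => ((k : ℝ) + J + 1) ^ (1-s)) N
        simpa using this
    _ ≤ ((J : ℝ) + 1) ^ (1-s) := by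
        have h0 : ((0 : ℝ) + J + 1) = (J:ℝ) + 1 := by ring
        rw [h0]
        have : (0:ℝ) ≤ ((N : ℝ) + J + 1) ^ (1-s) := Real.rpow_nonneg (by positivity) _
        linarith


/-- **Uniform approximation bound** (Lemma 4, inequality (6.16)).
There is an absolute constant `C` such that: if the basis satisfies
`∑_{k=0}^l φ_k(t)² ≤ C_φ²(l+1)` on `[0,1]`, the coefficients satisfy
`∑_k |a_k|^ν (k+1)^{ν r'} ≤ C_a^ν` with `r' = r + 1/2 - 1/ν` and `r* = min(r,r') ≥ 2`,
then for `f = ∑_{k≥1} a_k φ_k` and its partial sum `f_J`, for all `J > 1`,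
`sup_{t∈[0,1]} |f(t) − f_J(t)| ≤ C · C_a C_φ (J+1)^{-(r*-1/2)}`. -/
theorem stmt_10 :
    ∃ C : ℝ, 0 < C ∧
      ∀ (φ : ℕ → ℝ → ℝ) (a : ℕ → ℝ) (Ca Cφ ν r : ℝ),
        0 < Ca → 0 < Cφ → 1 ≤ ν → r > min (1/2) (1/ν) →
        (∀ t ∈ Set.Icc (0:ℝ) 1, ∀ l : ℕ,
            ∑ k ∈ Finset.range (l + 1), (φ k t) ^ 2 ≤ Cφ ^ 2 * ((l : ℝ) + 1)) →
        Summable (fun k : ℕ => |a k| ^ ν * ((k : ℝ) + 1) ^ (ν * (r + 1/2 - 1/ν))) →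
        (∑' k : ℕ, |a k| ^ ν * ((k : ℝ) + 1) ^ (ν * (r + 1/2 - 1/ν))) ≤ Ca ^ ν →
        2 ≤ min r (r + 1/2 - 1/ν) →
        ∀ J : ℕ, 1 < J → ∀ t ∈ Set.Icc (0:ℝ) 1,
          |∑' k : ℕ, a (k + J + 1) * φ (k + J + 1) t|
            ≤ C * Ca * Cφ * ((J : ℝ) + 1) ^ (-(min r (r + 1/2 - 1/ν) - 1/2)) := by
  refine ⟨2, by norm_num, ?_⟩
  intro φ a Ca Cφ ν r hCa hCφ hν hr hφ hsum htsum hmin J hJ t ht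
  set r' : ℝ := r + 1/2 - 1/ν with hr'def
  set ρ : ℝ := min r r' with hρdef
  have hν0 : (0:ℝ) < ν := by linarith
  have hρr : ρ ≤ r := min_le_left _ _
  have hρr' : ρ ≤ r' := min_le_right _ _
  have hr2 : 2 ≤ r := hmin.trans hρr
  have hr'2 : 2 ≤ r' := hmin.trans hρr'
  have hJc : (0:ℝ) ≤ (J:ℝ) := Nat.cast_nonneg J
  have hJpos : (0:ℝ) < (J:ℝ) + 1 := by linarith
  have hJ1 : (1:ℝ) ≤ (J:ℝ) + 1 := by linarith
  -- the weighted coefficients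
  set x : ℕ → ℝ := fun k => |a k| * ((k:ℝ)+1) ^ r' with hxdef
  have hx0 : ∀ k, 0 ≤ x k := fun k =>
    mul_nonneg (abs_nonneg _) (Real.rpow_nonneg (by positivity) _)
  have hxν : ∀ k, x k ^ ν = |a k| ^ ν * ((k:ℝ)+1) ^ (ν * r') := by
    intro k
    rw [hxdef]
    rw [Real.mul_rpow (abs_nonneg _) (Real.rpow_nonneg (by positivity) _),
      ← Real.rpow_mul (by positivity : (0:ℝ) ≤ (k:ℝ)+1), mul_comm r' ν]
  have hsum' : Summable (fun k => x k ^ ν) := (summable_congr hxν).mpr hsum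
  have htsum' : ∑' k, x k ^ ν ≤ Ca ^ ν := by
    rw [tsum_congr hxν]; exact htsum
  have hxle : ∀ k, x k ≤ Ca := by
    intro k
    have h1 : x k ^ ν ≤ Ca ^ ν :=
      le_trans (Summable.le_tsum hsum' k (fun j _ => Real.rpow_nonneg (hx0 j) ν)) htsum'
    exact (Real.rpow_le_rpow_iff (hx0 k) hCa.le hν0).mp h1
  -- weights
  set u : ℕ → ℝ := fun k => (k:ℝ) + (J:ℝ) + 2 with hudef
  have hupos : ∀ k, (0:ℝ) < u k := fun k => by
    have : (0:ℝ) ≤ (k:ℝ) := Nat.cast_nonneg k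
    simp only [hudef]; linarith
  have hJu : ∀ k, (J:ℝ) + 1 ≤ u k := fun k => by
    have : (0:ℝ) ≤ (k:ℝ) := Nat.cast_nonneg k
    simp only [hudef]; linarith
  have hucast : ∀ k, ((k+J+1 : ℕ) : ℝ) + 1 = u k := by
    intro k; simp only [hudef]; push_cast; ring
  -- φ side
  have habel : ∀ N, ∑ k ∈ Finset.range N, (φ (k+J+1) t)^2 / ((k:ℝ)+J+2)^2
      ≤ 3 * Cφ^2 / ((J:ℝ)+1) :=
    aux_abel (fun k => (φ k t)^2) (fun k => sq_nonneg _) (sq_nonneg Cφ) (hφ t ht) J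
  have hGnn : ∀ k : ℕ, 0 ≤ (φ (k+J+1) t)^2 / ((k:ℝ)+J+2)^2 := fun k => by positivity
  have hGs : Summable (fun k => (φ (k+J+1) t)^2 / ((k:ℝ)+J+2)^2) :=
    summable_of_sum_range_le hGnn habel
  have hGt : ∑' k, (φ (k+J+1) t)^2 / ((k:ℝ)+J+2)^2 ≤ 3 * Cφ^2 / ((J:ℝ)+1) :=
    Real.tsum_le_of_sum_range_le hGnn habel
  -- a side
  have hFnn : ∀ k : ℕ, 0 ≤ x (k+J+1) ^ (2:ℝ) * u k ^ (2 - 2*r') := fun k =>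
    mul_nonneg (Real.rpow_nonneg (hx0 _) _) (Real.rpow_nonneg (hupos k).le _)
  have hshift : Function.Injective (fun k : ℕ => k + (J+1)) := add_left_injective _
  have hmain : Summable (fun k => x (k+J+1) ^ (2:ℝ) * u k ^ (2 - 2*r')) ∧
      ∑' k, x (k+J+1) ^ (2:ℝ) * u k ^ (2 - 2*r') ≤ Ca ^ (2:ℝ) * ((J:ℝ)+1) ^ (2 - 2*ρ) := by
    have hxshift : Summable (fun k => x (k+J+1) ^ ν) :=
      hsum'.comp_injective hshift
    have htshift : ∑' k, x (k+J+1) ^ ν ≤ Ca ^ ν :=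
      le_trans (tsum_comp_le_tsum_of_inj hsum' (fun j => Real.rpow_nonneg (hx0 j) ν) hshift)
        htsum'
    rcases le_or_gt ν 2 with hν2 | hν2
    · -- ν ≤ 2 : termwise
      have bound : ∀ k, x (k+J+1) ^ (2:ℝ) * u k ^ (2 - 2*r') ≤
          (Ca ^ (2-ν) * ((J:ℝ)+1) ^ (2 - 2*r')) * x (k+J+1) ^ ν := by
        intro k
        have hne : ν + (2 - ν) ≠ 0 := by
          rw [show ν + (2-ν) = (2:ℝ) by ring]; norm_num
        have e1 : x (k+J+1) ^ (2:ℝ) = x (k+J+1) ^ ν * x (k+J+1) ^ (2-ν) := by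
          rw [← Real.rpow_add' (hx0 _) hne]
          congr 1
          ring
        calc x (k+J+1) ^ (2:ℝ) * u k ^ (2 - 2*r')
            = x (k+J+1) ^ ν * (x (k+J+1) ^ (2-ν) * u k ^ (2 - 2*r')) := by rw [e1]; ring
          _ ≤ x (k+J+1) ^ ν * (Ca ^ (2-ν) * ((J:ℝ)+1) ^ (2 - 2*r')) := by
              apply mul_le_mul_of_nonneg_left _ (Real.rpow_nonneg (hx0 _) ν)
              apply mul_le_mul
              · exact Real.rpow_le_rpow (hx0 _) (hxle _) (by linarith)
              · exact Real.rpow_le_rpow_of_nonpos hJpos (hJu k) (by linarith)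
              · exact Real.rpow_nonneg (hupos k).le _
              · exact Real.rpow_nonneg hCa.le _
          _ = (Ca ^ (2-ν) * ((J:ℝ)+1) ^ (2 - 2*r')) * x (k+J+1) ^ ν := by ring
      have hcomp : Summable (fun k =>
          (Ca ^ (2-ν) * ((J:ℝ)+1) ^ (2 - 2*r')) * x (k+J+1) ^ ν) := hxshift.mul_left _
      have hFs : Summable (fun k => x (k+J+1) ^ (2:ℝ) * u k ^ (2 - 2*r')) :=
        Summable.of_nonneg_of_le hFnn bound hcomp
      refine ⟨hFs, ?_⟩
      calc ∑' k, x (k+J+1) ^ (2:ℝ) * u k ^ (2 - 2*r')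
          ≤ ∑' k, (Ca ^ (2-ν) * ((J:ℝ)+1) ^ (2 - 2*r')) * x (k+J+1) ^ ν :=
            Summable.tsum_le_tsum bound hFs hcomp
        _ = (Ca ^ (2-ν) * ((J:ℝ)+1) ^ (2 - 2*r')) * ∑' k, x (k+J+1) ^ ν := tsum_mul_left
        _ ≤ (Ca ^ (2-ν) * ((J:ℝ)+1) ^ (2 - 2*r')) * Ca ^ ν := by
            apply mul_le_mul_of_nonneg_left htshift
            exact mul_nonneg (Real.rpow_nonneg hCa.le _) (Real.rpow_nonneg hJpos.le _)
        _ = Ca ^ (2:ℝ) * ((J:ℝ)+1) ^ (2 - 2*r') := by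
            rw [show (2:ℝ) = (2-ν) + ν by ring, Real.rpow_add hCa]; ring
        _ ≤ Ca ^ (2:ℝ) * ((J:ℝ)+1) ^ (2 - 2*ρ) := by
            apply mul_le_mul_of_nonneg_left
              (Real.rpow_le_rpow_of_exponent_le hJ1 (by linarith))
              (Real.rpow_nonneg hCa.le _)
    · -- ν > 2 : Hölder with p = ν/2
      set q : ℝ := ν / (ν - 2) with hqdef
      have hν2' : (0:ℝ) < ν - 2 := by linarith
      have hq0 : (0:ℝ) < q := by positivity
      have hq1 : (1:ℝ) < q := by
        rw [hqdef, lt_div_iff₀ hν2']; linarith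
      have hpq : Real.HolderConjugate (ν/2) q := by
        rw [Real.holderConjugate_iff]
        constructor
        · linarith [hν2]
        · rw [hqdef]
          field_simp
          ring
      set s : ℝ := (2*r' - 2) * q with hsdef
      have hs2 : (2:ℝ) ≤ s := by
        have h1 : (2:ℝ) ≤ 2*r' - 2 := by linarith
        nlinarith [hq1, h1]
      have hfid : ∀ k, (x (k+J+1) ^ (2:ℝ)) ^ (ν/2) = x (k+J+1) ^ ν := by
        intro k
        rw [← Real.rpow_mul (hx0 _), show (2:ℝ) * (ν/2) = ν by ring]
      have hgid : ∀ k, (u k ^ (2 - 2*r')) ^ q = ((k:ℝ)+J+2) ^ (-s) := by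
        intro k
        rw [← Real.rpow_mul (hupos k).le, show (2 - 2*r') * q = -s by rw [hsdef]; ring]
      have hf_sum : Summable fun k => (x (k+J+1) ^ (2:ℝ)) ^ (ν/2) :=
        (summable_congr hfid).mpr hxshift
      have hg_sum : Summable fun k => (u k ^ (2 - 2*r')) ^ q := by
        rw [summable_congr hgid]
        exact summable_of_sum_range_le
          (fun k => Real.rpow_nonneg (by positivity) _) (aux_tail_pow hs2 J)
      have happly := Real.summable_and_inner_le_Lp_mul_Lq_tsum_of_nonneg hpq
        (f := fun k => x (k+J+1) ^ (2:ℝ)) (g := fun k => u k ^ (2 - 2*r'))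
        (fun i => Real.rpow_nonneg (hx0 _) _) (fun i => Real.rpow_nonneg (hupos i).le _)
        hf_sum hg_sum
      refine ⟨happly.1, ?_⟩
      have hgt : ∑' k, (u k ^ (2 - 2*r')) ^ q ≤ ((J:ℝ)+1) ^ (1-s) := by
        rw [tsum_congr hgid]
        exact Real.tsum_le_of_sum_range_le
          (fun k => Real.rpow_nonneg (by positivity) _) (aux_tail_pow hs2 J)
      have hft : ∑' k, (x (k+J+1) ^ (2:ℝ)) ^ (ν/2) ≤ Ca ^ ν := by
        rw [tsum_congr hfid]; exact htshift
      calc ∑' k, x (k+J+1) ^ (2:ℝ) * u k ^ (2 - 2*r')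
          ≤ (∑' k, (x (k+J+1) ^ (2:ℝ)) ^ (ν/2)) ^ (1/(ν/2)) *
              (∑' k, (u k ^ (2 - 2*r')) ^ q) ^ (1/q) := happly.2
        _ ≤ (Ca ^ ν) ^ (1/(ν/2)) * (((J:ℝ)+1) ^ (1-s)) ^ (1/q) := by
            apply mul_le_mul
            · exact Real.rpow_le_rpow (tsum_nonneg fun k => Real.rpow_nonneg
                (Real.rpow_nonneg (hx0 _) _) _) hft (by positivity)
            · exact Real.rpow_le_rpow (tsum_nonneg fun k => Real.rpow_nonneg
                (Real.rpow_nonneg (hupos k).le _) _) hgt (by positivity)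
            · exact Real.rpow_nonneg (tsum_nonneg fun k => Real.rpow_nonneg
                (Real.rpow_nonneg (hupos k).le _) _) _
            · exact Real.rpow_nonneg (Real.rpow_nonneg hCa.le _) _
        _ = Ca ^ (2:ℝ) * ((J:ℝ)+1) ^ ((1-s) * (1/q)) := by
            rw [← Real.rpow_mul hCa.le, ← Real.rpow_mul hJpos.le,
              show ν * (1/(ν/2)) = 2 by field_simp]
        _ ≤ Ca ^ (2:ℝ) * ((J:ℝ)+1) ^ (2 - 2*ρ) := by
            apply mul_le_mul_of_nonneg_left _ (Real.rpow_nonneg hCa.le _)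
            apply Real.rpow_le_rpow_of_exponent_le hJ1
            have hexp : (1-s) * (1/q) = 2 - 2*r := by
              rw [hsdef, hqdef, hr'def]
              field_simp
              ring
            rw [hexp]
            linarith
  obtain ⟨hFs, hFt⟩ := hmain
  -- Cauchy–Schwarz
  set f2 : ℕ → ℝ := fun k => |a (k+J+1)| * u k with hf2def
  set g2 : ℕ → ℝ := fun k => |φ (k+J+1) t| / u k with hg2def
  have hf2sq : ∀ k, f2 k ^ (2:ℝ) = x (k+J+1) ^ (2:ℝ) * u k ^ (2 - 2*r') := by
    intro k
    rw [hf2def, hxdef]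
    simp only
    rw [hucast k]
    rw [Real.mul_rpow (abs_nonneg _) (hupos k).le,
      Real.mul_rpow (abs_nonneg _) (Real.rpow_nonneg (hupos k).le _),
      ← Real.rpow_mul (hupos k).le, mul_assoc,
      ← Real.rpow_add (hupos k), show r' * 2 + (2 - 2*r') = 2 by ring]
  have hg2sq : ∀ k, g2 k ^ (2:ℝ) = (φ (k+J+1) t)^2 / ((k:ℝ)+J+2)^2 := by
    intro k
    rw [hg2def]
    simp only
    rw [show (2:ℝ) = ((2:ℕ):ℝ) by norm_num, Real.rpow_natCast, div_pow, sq_abs]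
    rfl
  have hf2_sum : Summable fun k => f2 k ^ (2:ℝ) := (summable_congr hf2sq).mpr hFs
  have hg2_sum : Summable fun k => g2 k ^ (2:ℝ) := (summable_congr hg2sq).mpr hGs
  have h22 : Real.HolderConjugate 2 2 := Real.holderConjugate_iff.mpr ⟨one_lt_two, by norm_num⟩
  have hCS := Real.summable_and_inner_le_Lp_mul_Lq_tsum_of_nonneg h22
    (f := f2) (g := g2)
    (fun i => mul_nonneg (abs_nonneg _) (hupos i).le)
    (fun i => div_nonneg (abs_nonneg _) (hupos i).le)
    hf2_sum hg2_sum
  have hfg : ∀ k, f2 k * g2 k = |a (k+J+1) * φ (k+J+1) t| := by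
    intro k
    rw [hf2def, hg2def, abs_mul]
    simp only
    have := (hupos k).ne'
    field_simp
  have hsumAbs : Summable (fun k => |a (k+J+1) * φ (k+J+1) t|) :=
    (summable_congr hfg).mp hCS.1
  have hsumAP : Summable (fun k => a (k+J+1) * φ (k+J+1) t) :=
    summable_abs_iff.mp hsumAbs
  -- final assembly
  have hnorm : |∑' k, a (k+J+1) * φ (k+J+1) t| ≤ ∑' k, |a (k+J+1) * φ (k+J+1) t| := by
    have h := norm_tsum_le_tsum_norm (f := fun k => a (k+J+1) * φ (k+J+1) t)
      (by simpa only [Real.norm_eq_abs] using hsumAbs)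
    simpa only [Real.norm_eq_abs] using h
  have htsum2 : (∑' k, f2 k ^ (2:ℝ)) ≤ Ca ^ (2:ℝ) * ((J:ℝ)+1) ^ (2 - 2*ρ) := by
    rw [tsum_congr hf2sq]; exact hFt
  have htsum3 : (∑' k, g2 k ^ (2:ℝ)) ≤ 3 * Cφ^2 / ((J:ℝ)+1) := by
    rw [tsum_congr hg2sq]; exact hGt
  have htsum2nn : (0:ℝ) ≤ ∑' k, f2 k ^ (2:ℝ) :=
    tsum_nonneg fun k => Real.rpow_nonneg (mul_nonneg (abs_nonneg _) (hupos k).le) _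
  have htsum3nn : (0:ℝ) ≤ ∑' k, g2 k ^ (2:ℝ) :=
    tsum_nonneg fun k => Real.rpow_nonneg (div_nonneg (abs_nonneg _) (hupos k).le) _
  have hA : (∑' k, f2 k ^ (2:ℝ)) ^ ((1:ℝ)/2) ≤ Ca * ((J:ℝ)+1) ^ (1 - ρ) := by
    calc (∑' k, f2 k ^ (2:ℝ)) ^ ((1:ℝ)/2)
        ≤ (Ca ^ (2:ℝ) * ((J:ℝ)+1) ^ (2 - 2*ρ)) ^ ((1:ℝ)/2) :=
          Real.rpow_le_rpow htsum2nn htsum2 (by norm_num)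
      _ = Ca * ((J:ℝ)+1) ^ (1 - ρ) := by
          rw [Real.mul_rpow (Real.rpow_nonneg hCa.le _) (Real.rpow_nonneg hJpos.le _),
            ← Real.rpow_mul hCa.le, ← Real.rpow_mul hJpos.le,
            show (2:ℝ) * (1/2) = 1 by norm_num, Real.rpow_one,
            show (2 - 2*ρ) * (1/2) = 1 - ρ by ring]
  have hB : (∑' k, g2 k ^ (2:ℝ)) ^ ((1:ℝ)/2) ≤ 2 * Cφ * ((J:ℝ)+1) ^ (-(1:ℝ)/2) := by
    calc (∑' k, g2 k ^ (2:ℝ)) ^ ((1:ℝ)/2)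
        ≤ (4 * Cφ^2 / ((J:ℝ)+1)) ^ ((1:ℝ)/2) := by
          apply Real.rpow_le_rpow htsum3nn _ (by norm_num)
          exact htsum3.trans
            (div_le_div_of_nonneg_right (by nlinarith [sq_nonneg Cφ]) hJpos.le)
      _ = 2 * Cφ * ((J:ℝ)+1) ^ (-(1:ℝ)/2) := by
          rw [show 4 * Cφ^2 / ((J:ℝ)+1) = (2*Cφ)^(2:ℕ) * ((J:ℝ)+1)^(-(1:ℝ)) by
            rw [Real.rpow_neg_one]; ring,
            ← Real.rpow_natCast (2*Cφ) 2,
            Real.mul_rpow (Real.rpow_nonneg (by linarith) _) (Real.rpow_nonneg hJpos.le _),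
            ← Real.rpow_mul (by linarith : (0:ℝ) ≤ 2*Cφ),
            ← Real.rpow_mul hJpos.le]
          norm_num
  calc |∑' k, a (k+J+1) * φ (k+J+1) t|
      ≤ ∑' k, |a (k+J+1) * φ (k+J+1) t| := hnorm
    _ = ∑' k, f2 k * g2 k := (tsum_congr hfg).symm
    _ ≤ (∑' k, f2 k ^ (2:ℝ)) ^ ((1:ℝ)/2) * (∑' k, g2 k ^ (2:ℝ)) ^ ((1:ℝ)/2) := hCS.2
    _ ≤ (Ca * ((J:ℝ)+1) ^ (1 - ρ)) * (2 * Cφ * ((J:ℝ)+1) ^ (-(1:ℝ)/2)) := by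
        apply mul_le_mul hA hB (Real.rpow_nonneg htsum3nn _)
        positivity
    _ = 2 * Ca * Cφ * ((J:ℝ)+1) ^ (-(ρ - 1/2)) := by
        rw [show (Ca * ((J:ℝ)+1) ^ (1 - ρ)) * (2 * Cφ * ((J:ℝ)+1) ^ (-(1:ℝ)/2))
            = 2 * Ca * Cφ * (((J:ℝ)+1) ^ (1 - ρ) * ((J:ℝ)+1) ^ (-(1:ℝ)/2)) by ring,
          ← Real.rpow_add hJpos, show (1 - ρ) + (-(1:ℝ)/2) = -(ρ - 1/2) by ring]
end

section
/- Cone condition for the block-LASSO minimizer (inequality (6.11)). Let B ∈ ℝ^{n×p(L+1)}, Y ∈ ℝ^n, δ̂ > 0, and let a ∈ ℝ^{p(L+1)} be any vector, with block partition of ℝ^{p(L+1)} as in the block norm. Let â be a minimizer over α of n^{−1}‖Y − Bα‖₂² + 2δ̂‖α‖_block. If (2/n)|⟨â − a, B^T(Y − Ba)⟩| ≤ δ̂‖â − a‖_block, then Σ_{(j,l)∉J₀} ‖(a − â)_{jl}‖₂ ≤ 3 Σ_{(j,l)∈J₀} ‖(a − â)_{jl}‖₂, where J₀ = {(j,l)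 : ‖a_{jl}‖₂ ≠ 0} is the set of nonzero blocks of a. -/
open Matrix
open scoped Classical

/-- The `ℓ²` norm of block `l` of the coefficient vector `α ∈ ℝ^{p(L+1)}`:
block `0` of covariate `j` is the single coordinate `α_{j0}`, and block `l ≥ 1`
consists of the `d` coordinates `α_{j,d(l-1)+1}, …, α_{j,dl}`. -/
noncomputable def blockAt (p L d : ℕ) (α : Fin p × Fin (L + 1) → ℝ)
    (j : Fin p) (l : ℕ) : ℝ :=
  Real.sqrt (∑ k ∈ Finset.univ.filter
      (fun k : Fin (L + 1) =>
        (if (k : ℕ) = 0 then 0 else ((k : ℕ) - 1) / d + 1) = l),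
    (α (j, k)) ^ 2)

/-- The block norm `‖α‖_block = ∑_{j=1}^p ∑_{l=0}^M ‖α_{jl}‖₂`. -/
noncomputable def blockNormP (p L d M : ℕ) (α : Fin p × Fin (L + 1) → ℝ) : ℝ :=
  ∑ j : Fin p, ∑ l ∈ Finset.range (M + 1), blockAt p L d α j l

lemma sqrt_sum_sq_add_le {ι : Type*} (s : Finset ι) (f g : ι → ℝ) :
    Real.sqrt (∑ i ∈ s, (f i + g i) ^ 2)
      ≤ Real.sqrt (∑ i ∈ s, f i ^ 2) + Real.sqrt (∑ i ∈ s, g i ^ 2) := by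
  have hX : (0:ℝ) ≤ ∑ i ∈ s, f i ^ 2 := Finset.sum_nonneg fun i _ => sq_nonneg _
  have hY : (0:ℝ) ≤ ∑ i ∈ s, g i ^ 2 := Finset.sum_nonneg fun i _ => sq_nonneg _
  have hcs := Real.sum_mul_le_sqrt_mul_sqrt s f g
  have hexp : ∑ i ∈ s, (f i + g i) ^ 2
      = (∑ i ∈ s, f i ^ 2) + 2 * (∑ i ∈ s, f i * g i) + ∑ i ∈ s, g i ^ 2 := by
    rw [Finset.mul_sum, ← Finset.sum_add_distrib, ← Finset.sum_add_distrib]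
    exact Finset.sum_congr rfl fun i _ => by ring
  have hle : ∑ i ∈ s, (f i + g i) ^ 2
      ≤ (Real.sqrt (∑ i ∈ s, f i ^ 2) + Real.sqrt (∑ i ∈ s, g i ^ 2)) ^ 2 := by
    rw [hexp, add_sq, Real.sq_sqrt hX, Real.sq_sqrt hY]
    nlinarith [hcs]
  calc Real.sqrt (∑ i ∈ s, (f i + g i) ^ 2)
      ≤ Real.sqrt ((Real.sqrt (∑ i ∈ s, f i ^ 2) + Real.sqrt (∑ i ∈ s, g i ^ 2)) ^ 2) :=
        Real.sqrt_le_sqrt hle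
    _ = _ := Real.sqrt_sq (by positivity)

lemma blockAt_nonneg (p L d : ℕ) (α : Fin p × Fin (L + 1) → ℝ) (j : Fin p) (l : ℕ) :
    0 ≤ blockAt p L d α j l := Real.sqrt_nonneg _

lemma blockAt_neg (p L d : ℕ) (α : Fin p × Fin (L + 1) → ℝ) (j : Fin p) (l : ℕ) :
    blockAt p L d (-α) j l = blockAt p L d α j l := by
  unfold blockAt
  congr 1
  exact Finset.sum_congr rfl fun k _ => by simp [neg_sq]

lemma blockAt_add_le (p L d : ℕ) (α β : Fin p × Fin (L + 1) → ℝ) (j : Fin p) (l : ℕ) :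
    blockAt p L d (α + β) j l ≤ blockAt p L d α j l + blockAt p L d β j l := by
  unfold blockAt
  simpa using sqrt_sum_sq_add_le (Finset.univ.filter
      (fun k : Fin (L + 1) =>
        (if (k : ℕ) = 0 then 0 else ((k : ℕ) - 1) / d + 1) = l))
    (fun k => α (j, k)) (fun k => β (j, k))

lemma blockAt_sub_comm (p L d : ℕ) (α β : Fin p × Fin (L + 1) → ℝ) (j : Fin p) (l : ℕ) :
    blockAt p L d (α - β) j l = blockAt p L d (β - α) j l := by
  rw [← blockAt_neg p L d (α - β), neg_sub]

/-- **Cone condition for the block-LASSO minimizer** (inequality (6.11)).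
If `â` minimizes `n⁻¹‖Y − Bα‖₂² + 2δ̂‖α‖_block` and
`(2/n)|⟨â − a, Bᵀ(Y − Ba)⟩| ≤ δ̂‖â − a‖_block`, then
`∑_{(j,l)∉J₀} ‖(a−â)_{jl}‖₂ ≤ 3 ∑_{(j,l)∈J₀} ‖(a−â)_{jl}‖₂`, where `J₀` is the
set of nonzero blocks of `a`. -/
theorem stmt_17 (p M d n : ℕ) (hd : 1 ≤ d) (hn : 1 ≤ n)
    (B : Matrix (Fin n) (Fin p × Fin (M * d + 1)) ℝ) (Y : Fin n → ℝ)
    (δ : ℝ) (hδ : 0 < δ)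
    (a ahat : Fin p × Fin (M * d + 1) → ℝ)
    (hmin : ∀ α : Fin p × Fin (M * d + 1) → ℝ,
      (n : ℝ)⁻¹ * ∑ i, (Y i - B.mulVec ahat i) ^ 2
          + 2 * δ * blockNormP p (M * d) d M ahat
        ≤ (n : ℝ)⁻¹ * ∑ i, (Y i - B.mulVec α i) ^ 2
          + 2 * δ * blockNormP p (M * d) d M α)
    (hip : (2 / (n : ℝ)) * |(ahat - a) ⬝ᵥ (B.transpose.mulVec (Y - B.mulVec a))|
        ≤ δ * blockNormP p (M * d) d M (ahat - a)) :
    ∑ q ∈ (Finset.univ ×ˢ Finset.range (M + 1)).filter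
        (fun q : Fin p × ℕ => blockAt p (M * d) d a q.1 q.2 = 0),
        blockAt p (M * d) d (a - ahat) q.1 q.2
      ≤ 3 * ∑ q ∈ (Finset.univ ×ˢ Finset.range (M + 1)).filter
          (fun q : Fin p × ℕ => blockAt p (M * d) d a q.1 q.2 ≠ 0),
          blockAt p (M * d) d (a - ahat) q.1 q.2 := by
  have hnpos : (0:ℝ) < (n:ℝ) := by exact_mod_cast hn
  set w : Fin n → ℝ := B.mulVec (ahat - a) with hw
  set T : ℝ := (ahat - a) ⬝ᵥ (B.transpose.mulVec (Y - B.mulVec a)) with hT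
  -- dot product identity
  have hdot : T = ∑ i, w i * (Y i - B.mulVec a i) := by
    rw [hT, Matrix.dotProduct_mulVec, Matrix.vecMul_transpose]
    simp [dotProduct, hw]
  -- quadratic expansion
  have hveq : ∀ i, B.mulVec ahat i = B.mulVec a i + w i := by
    intro i
    have h : B.mulVec a + B.mulVec (ahat - a) = B.mulVec ahat := by
      rw [← Matrix.mulVec_add, add_sub_cancel]
    rw [hw, ← h]; rfl
  have hsq : ∑ i, (Y i - B.mulVec ahat i) ^ 2
      = (∑ i, (Y i - B.mulVec a i) ^ 2) - 2 * T + ∑ i, w i ^ 2 := by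
    rw [hdot, Finset.mul_sum, ← Finset.sum_sub_distrib, ← Finset.sum_add_distrib]
    refine Finset.sum_congr rfl fun i _ => ?_
    rw [hveq i]; ring
  -- key inequality 2‖ahat‖ ≤ ‖ahat-a‖ + 2‖a‖
  have h0 := hmin a
  rw [hsq] at h0
  have hW : (0:ℝ) ≤ (n:ℝ)⁻¹ * ∑ i, w i ^ 2 := by positivity
  have e1 : (n:ℝ)⁻¹ * ((∑ i, (Y i - B.mulVec a i) ^ 2) - 2 * T + ∑ i, w i ^ 2)
      = (n:ℝ)⁻¹ * (∑ i, (Y i - B.mulVec a i) ^ 2) - 2 * (n:ℝ)⁻¹ * T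
        + (n:ℝ)⁻¹ * ∑ i, w i ^ 2 := by ring
  have e2 : 2 * (n:ℝ)⁻¹ * T ≤ (2 / (n:ℝ)) * |T| := by
    rw [div_eq_mul_inv]
    have := mul_le_mul_of_nonneg_left (le_abs_self T)
      (by positivity : (0:ℝ) ≤ 2 * (n:ℝ)⁻¹)
    linarith
  have hkey : 2 * δ * blockNormP p (M * d) d M ahat
      ≤ δ * blockNormP p (M * d) d M (ahat - a)
        + 2 * δ * blockNormP p (M * d) d M a := by
    rw [e1] at h0
    linarith
  have hkey2 : 2 * blockNormP p (M * d) d M ahat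
      ≤ blockNormP p (M * d) d M (ahat - a) + 2 * blockNormP p (M * d) d M a := by
    have h := (mul_le_mul_iff_of_pos_left hδ).mp (by linarith :
      δ * (2 * blockNormP p (M * d) d M ahat)
        ≤ δ * (blockNormP p (M * d) d M (ahat - a) + 2 * blockNormP p (M * d) d M a))
    linarith
  -- blockNormP as a sum over the product set
  set Q := (Finset.univ : Finset (Fin p)) ×ˢ Finset.range (M + 1) with hQ
  have hBN : ∀ α : Fin p × Fin (M * d + 1) → ℝ,
      blockNormP p (M * d) d M α = ∑ q ∈ Q, blockAt p (M * d) d α q.1 q.2 := by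
    intro α
    rw [hQ, Finset.sum_product]
    rfl
  set A : Fin p × ℕ → ℝ := fun q => blockAt p (M * d) d a q.1 q.2 with hA
  set H : Fin p × ℕ → ℝ := fun q => blockAt p (M * d) d ahat q.1 q.2 with hH
  set D : Fin p × ℕ → ℝ := fun q => blockAt p (M * d) d (ahat - a) q.1 q.2 with hD
  -- rewrite goal with D
  have hgoal : ∀ q : Fin p × ℕ,
      blockAt p (M * d) d (a - ahat) q.1 q.2 = D q := fun q =>
    blockAt_sub_comm p (M * d) d a ahat q.1 q.2
  simp only [hgoal]
  set S := Q.filter (fun q : Fin p × ℕ => A q ≠ 0) with hS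
  set N := Q.filter (fun q : Fin p × ℕ => A q = 0) with hN
  have hsplit : ∀ f : Fin p × ℕ → ℝ, ∑ q ∈ Q, f q = ∑ q ∈ N, f q + ∑ q ∈ S, f q := by
    intro f
    rw [hS, hN]
    exact (Finset.sum_filter_add_sum_filter_not Q _ f).symm
  have hkey3 : 2 * (∑ q ∈ N, H q + ∑ q ∈ S, H q)
      ≤ (∑ q ∈ N, D q + ∑ q ∈ S, D q) + 2 * (∑ q ∈ N, A q + ∑ q ∈ S, A q) := by
    have := hkey2
    rw [hBN, hBN, hBN, hsplit, hsplit, hsplit] at this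
    exact this
  have hNA : ∑ q ∈ N, A q = 0 := by
    refine Finset.sum_eq_zero fun q hq => ?_
    exact (Finset.mem_filter.mp hq).2
  have hND : ∑ q ∈ N, D q ≤ ∑ q ∈ N, H q := by
    refine Finset.sum_le_sum fun q hq => ?_
    have hq0 : A q = 0 := (Finset.mem_filter.mp hq).2
    have h1 : D q ≤ H q + A q := by
      have := blockAt_add_le p (M * d) d ahat (-a) q.1 q.2
      rw [blockAt_neg] at this
      simpa [hD, hH, hA, sub_eq_add_neg] using this
    linarith
  have hSA : ∑ q ∈ S, A q ≤ ∑ q ∈ S, H q + ∑ q ∈ S, D q := by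
    rw [← Finset.sum_add_distrib]
    refine Finset.sum_le_sum fun q _ => ?_
    have := blockAt_add_le p (M * d) d ahat (a - ahat) q.1 q.2
    have heq : ahat + (a - ahat) = a := by abel
    rw [heq] at this
    have hc : blockAt p (M * d) d (a - ahat) q.1 q.2 = D q :=
      blockAt_sub_comm p (M * d) d a ahat q.1 q.2
    rw [hc] at this
    exact this
  linarith
end
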